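/- arXiv:2110.03747 — 6 statements merged into one kernel-verified Lean document; each statement's English description precedes it below -/
import Mathlib

section
/- Let A be an n×n real matrix, B an n×m real matrix, C an m×n real matrix, P an n×n symmetric positive definite real matrix, and let a, b be real numbers with a < 0 < b. Then the block matrix [[P·A + Aᵀ·P + Cᵀ·C , P·B − ((a+b)/2)·Cᵀ] ; [Bᵀ·P − ((a+b)/2)·C , a·b·I_m]] is negative semidefinite if and only if the matrix P·(A + ((a+b)/(2ab))·B·C) + (Aᵀ + ((a+b)/(2ab))·Cᵀ·Bᵀ)·P + (1 − (a+b)²/(4ab))·Cᵀ·C − (1/(ab))·P·B·Bᵀ·P is negative semidefinite. -/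
open Matrix

/-- Equivalence of forms (1) and (3) of the Conic Sector Lemma LMI. -/
theorem conic_sector_lemma_form1_iff_form3
    {n m : ℕ} (A : Matrix (Fin n) (Fin n) ℝ) (B : Matrix (Fin n) (Fin m) ℝ)
    (C : Matrix (Fin m) (Fin n) ℝ) (P : Matrix (Fin n) (Fin n) ℝ)
    (hP : P.PosDef) (a b : ℝ) (ha : a < 0) (hb : 0 < b) :
    (-(Matrix.fromBlocks
        (P * A + Aᵀ * P + Cᵀ * C) (P * B - ((a + b) / 2) • Cᵀ)
        (Bᵀ * P - ((a + b) / 2) • C) ((a * b) • (1 : Matrix (Fin m) (Fin m) ℝ)))).PosSemidef ↔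
    (-(P * (A + ((a + b) / (2 * a * b)) • (B * C))
        + (Aᵀ + ((a + b) / (2 * a * b)) • (Cᵀ * Bᵀ)) * P
        + (1 - (a + b) ^ 2 / (4 * (a * b))) • (Cᵀ * C)
        - (1 / (a * b)) • (P * B * Bᵀ * P))).PosSemidef := by
  have hab : a * b < 0 := mul_neg_of_neg_of_pos ha hb
  have habne : a * b ≠ 0 := ne_of_lt hab
  set c : ℝ := (a + b) / 2 with hc
  set Y : Matrix (Fin n) (Fin m) ℝ := P * B - c • Cᵀ with hY
  set X : Matrix (Fin n) (Fin n) ℝ := P * A + Aᵀ * P + Cᵀ * C with hX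
  set D : Matrix (Fin m) (Fin m) ℝ := (-(a * b)) • (1 : Matrix (Fin m) (Fin m) ℝ) with hD
  have hDpos : D.PosDef := by
    rw [hD, smul_one_eq_diagonal]
    exact Matrix.PosDef.diagonal (fun _ => by simpa using neg_pos.mpr hab)
  haveI : Invertible D := invertibleOfRightInverse _ ((-(a * b))⁻¹ • (1 : Matrix (Fin m) (Fin m) ℝ))
    (by rw [hD, smul_mul_smul_comm, one_mul, mul_inv_cancel₀ (by simpa using habne), one_smul])
  have hDinv : D⁻¹ = (-(a * b))⁻¹ • (1 : Matrix (Fin m) (Fin m) ℝ) := by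
    apply Matrix.inv_eq_right_inv
    rw [hD, smul_mul_smul_comm, one_mul, mul_inv_cancel₀ (by simpa using habne), one_smul]
  have hPt : Pᵀ = P := by simpa using hP.isHermitian.eq
  have hblocks : -(Matrix.fromBlocks X Y (Bᵀ * P - c • C) ((a * b) • (1 : Matrix (Fin m) (Fin m) ℝ)))
      = Matrix.fromBlocks (-X) (-Y) (-Y)ᴴ D := by
    rw [Matrix.fromBlocks_neg, hD, ← neg_smul]
    simp [hY, conjTranspose_sub, transpose_sub, conjTranspose_smul,
      conjTranspose_mul, hP.isHermitian.eq, hPt]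
  rw [hblocks, Matrix.PosDef.fromBlocks₂₂ _ _ hDpos]
  have hschur : -X - -Y * D⁻¹ * (-Y)ᴴ
      = -(P * (A + ((a + b) / (2 * a * b)) • (B * C))
        + (Aᵀ + ((a + b) / (2 * a * b)) • (Cᵀ * Bᵀ)) * P
        + (1 - (a + b) ^ 2 / (4 * (a * b))) • (Cᵀ * C)
        - (1 / (a * b)) • (P * B * Bᵀ * P)) := by
    rw [hDinv, hY, hX]
    simp only [conjTranspose_sub, conjTranspose_smul, conjTranspose_mul,
      hP.isHermitian.eq, Matrix.neg_mul, Matrix.mul_neg, neg_neg,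
      Matrix.mul_smul, Matrix.smul_mul, Matrix.mul_one, Matrix.sub_mul, Matrix.mul_sub,
      Matrix.mul_add, Matrix.add_mul, smul_smul, smul_sub, smul_add, Matrix.mul_assoc,
      conjTranspose_eq_transpose_of_trivial, transpose_neg, transpose_sub, transpose_mul,
      transpose_smul, transpose_transpose, Matrix.neg_mul, Matrix.mul_neg, neg_neg,
      smul_neg, neg_smul, hPt]
    have ha' : a ≠ 0 := ne_of_lt ha
    have hb' : b ≠ 0 := ne_of_gt hb
    match_scalars <;> field_simp <;> ring
  rw [hschur]
end

section
/- Let A be an n×n real matrix, B an n×m real matrix, C an m×n real matrix, P an n×n symmetric positive definite real matrix, and let a, b be real numbers with a < 0 < b. Then the block matrix [[P·A + Aᵀ·P + Cᵀ·C , P·B − ((a+b)/2)·Cᵀ] ; [Bᵀ·P − ((a+b)/2)·C , a·b·I_m]] is negative semidefinite if and only if, with P' := (1/b)·P, the 3×3 block matrix [[P'·A + Aᵀ·P' , P'·B , Cᵀ] ; [Bᵀ·P' , −((a−b)²/(4b))·I_m , −((a+b)/2)·I_m] ; [C , −((a+b)/2)·I_m , −b·I_m]] is negative semidefinite. -/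
open Matrix

lemma aux_smul_one_posDef {m : ℕ} {d : ℝ} (hd : 0 < d) :
    (d • (1 : Matrix (Fin m) (Fin m) ℝ)).PosDef := by
  have h : d • (1 : Matrix (Fin m) (Fin m) ℝ) = Matrix.diagonal (fun _ => d) := by
    ext i j
    simp [Matrix.diagonal_apply, Matrix.one_apply]
  rw [h]
  exact Matrix.posDef_diagonal_iff.mpr (fun _ => hd)

lemma aux_posSemidef_smul {k : Type*} [Fintype k] {M : Matrix k k ℝ} {c : ℝ} (hc : 0 ≤ c)
    (hM : M.PosSemidef) : (c • M).PosSemidef := by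
  refine Matrix.PosSemidef.of_dotProduct_mulVec_nonneg ?_ (fun x => ?_)
  · unfold Matrix.IsHermitian
    rw [Matrix.conjTranspose_smul, hM.1.eq, star_trivial]
  · have := hM.dotProduct_mulVec_nonneg x
    rw [Matrix.smul_mulVec, dotProduct_smul, smul_eq_mul]
    exact mul_nonneg hc this

lemma aux_posSemidef_smul_iff {k : Type*} [Fintype k] {M : Matrix k k ℝ} {c : ℝ} (hc : 0 < c) :
    (c • M).PosSemidef ↔ M.PosSemidef := by
  constructor
  · intro h
    have := aux_posSemidef_smul (c := c⁻¹) (by positivity) h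
    rwa [smul_smul, inv_mul_cancel₀ hc.ne', one_smul] at this
  · exact aux_posSemidef_smul hc.le

lemma aux_dot_nonneg {k : Type*} [Fintype k] (u : k → ℝ) : 0 ≤ u ⬝ᵥ u :=
  Finset.sum_nonneg fun i _ => mul_self_nonneg _

lemma aux_dot_pos {k : Type*} [Fintype k] {u : k → ℝ} (hu : u ≠ 0) : 0 < u ⬝ᵥ u :=
  lt_of_le_of_ne (aux_dot_nonneg u) fun h => hu (dotProduct_self_eq_zero.mp h.symm)

lemma aux_D2_posDef {m : ℕ} {α c b : ℝ} (hb : 0 < b) (hdet : 0 < α * b - c ^ 2) :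
    (Matrix.fromBlocks (α • (1 : Matrix (Fin m) (Fin m) ℝ)) (c • 1) (c • 1)
      (b • (1 : Matrix (Fin m) (Fin m) ℝ))).PosDef := by
  refine Matrix.posDef_iff_dotProduct_mulVec.mpr ⟨?_, ?_⟩
  · rw [Matrix.isHermitian_fromBlocks_iff]
    refine ⟨?_, ?_, ?_⟩ <;>
      simp [Matrix.IsHermitian, Matrix.conjTranspose_smul, Matrix.conjTranspose_one]
  · intro x hx
    have hx' : x = Sum.elim (x ∘ Sum.inl) (x ∘ Sum.inr) := (Sum.elim_comp_inl_inr x).symm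
    set u := x ∘ Sum.inl with hu
    set v := x ∘ Sum.inr with hv
    have key : star x ⬝ᵥ ((Matrix.fromBlocks (α • (1 : Matrix (Fin m) (Fin m) ℝ)) (c • 1) (c • 1)
        (b • (1 : Matrix (Fin m) (Fin m) ℝ))) *ᵥ x) =
        α * (u ⬝ᵥ u) + c * (u ⬝ᵥ v) + c * (v ⬝ᵥ u) + b * (v ⬝ᵥ v) := by
      rw [hx']
      simp [Matrix.fromBlocks_mulVec, Matrix.smul_mulVec, Matrix.one_mulVec,
        sumElim_dotProduct_sumElim, dotProduct_add, dotProduct_smul,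
        smul_eq_mul]
      ring
    rw [key]
    have hw : (c • u + b • v) ⬝ᵥ (c • u + b • v)
        = c^2 * (u ⬝ᵥ u) + c*b*(u ⬝ᵥ v) + c*b*(v ⬝ᵥ u) + b^2 * (v ⬝ᵥ v) := by
      simp [dotProduct_add, add_dotProduct, dotProduct_smul,
        smul_dotProduct, smul_eq_mul]
      ring
    have hnn := aux_dot_nonneg (c • u + b • v)
    by_cases hu0 : u = 0
    · have hv0 : v ≠ 0 := by
        intro hv0
        apply hx
        rw [hx', hu0, hv0]
        ext (i|i) <;> simp
      have := aux_dot_pos hv0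
      rw [hu0] at *
      simp only [zero_dotProduct, dotProduct_zero] at *
      nlinarith
    · have h1 := aux_dot_pos hu0
      have h2 : 0 < b * (α * (u ⬝ᵥ u) + c * (u ⬝ᵥ v) + c * (v ⬝ᵥ u) + b * (v ⬝ᵥ v)) := by
        nlinarith
      nlinarith

/-- Equivalence of forms (1) and (2) of the Conic Sector Lemma LMI. -/
theorem conic_sector_lemma_form1_iff_form2
    {n m : ℕ} (A : Matrix (Fin n) (Fin n) ℝ) (B : Matrix (Fin n) (Fin m) ℝ)
    (C : Matrix (Fin m) (Fin n) ℝ) (P : Matrix (Fin n) (Fin n) ℝ)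
    (hP : P.PosDef) (a b : ℝ) (ha : a < 0) (hb : 0 < b) :
    (-(Matrix.fromBlocks
        (P * A + Aᵀ * P + Cᵀ * C) (P * B - ((a + b) / 2) • Cᵀ)
        (Bᵀ * P - ((a + b) / 2) • C) ((a * b) • (1 : Matrix (Fin m) (Fin m) ℝ)))).PosSemidef ↔
    (-(Matrix.fromBlocks
        (((1 / b) • P) * A + Aᵀ * ((1 / b) • P))
        (Matrix.fromCols (((1 / b) • P) * B) Cᵀ)
        (Matrix.fromRows (Bᵀ * ((1 / b) • P)) C)
        (Matrix.fromBlocks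
          ((-((a - b) ^ 2 / (4 * b))) • (1 : Matrix (Fin m) (Fin m) ℝ))
          ((-((a + b) / 2)) • (1 : Matrix (Fin m) (Fin m) ℝ))
          ((-((a + b) / 2)) • (1 : Matrix (Fin m) (Fin m) ℝ))
          ((-b) • (1 : Matrix (Fin m) (Fin m) ℝ))))).PosSemidef := by
  have hbne : b ≠ 0 := hb.ne'
  have hane : a ≠ 0 := ha.ne
  have hdpos : 0 < -(a*b) := by nlinarith
  have hdne : -(a*b) ≠ 0 := hdpos.ne'
  have hPh : Pᴴ = P := hP.1
  -- abbreviations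
  set c : ℝ := (a + b) / 2 with hc
  set α : ℝ := (a - b) ^ 2 / (4 * b) with hα
  set d : ℝ := -(a * b) with hd
  -- form 1 block data
  set W : Matrix (Fin n) (Fin n) ℝ := -(P * A + Aᵀ * P + Cᵀ * C) with hW
  set Y : Matrix (Fin n) (Fin m) ℝ := -(P * B - c • Cᵀ) with hY
  -- form 2 block data
  set X : Matrix (Fin n) (Fin n) ℝ := -(((1 / b) • P) * A + Aᵀ * ((1 / b) • P)) with hX
  set Y2 : Matrix (Fin n) (Fin m ⊕ Fin m) ℝ :=
    -(Matrix.fromCols (((1 / b) • P) * B) Cᵀ) with hY2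
  set D2 : Matrix (Fin m ⊕ Fin m) (Fin m ⊕ Fin m) ℝ :=
    Matrix.fromBlocks (α • (1 : Matrix (Fin m) (Fin m) ℝ)) (c • 1) (c • 1)
      (b • (1 : Matrix (Fin m) (Fin m) ℝ)) with hD2def
  set D2inv : Matrix (Fin m ⊕ Fin m) (Fin m ⊕ Fin m) ℝ :=
    Matrix.fromBlocks ((b / d) • (1 : Matrix (Fin m) (Fin m) ℝ)) ((-c / d) • 1) ((-c / d) • 1)
      ((α / d) • (1 : Matrix (Fin m) (Fin m) ℝ)) with hD2inv
  -- positive definiteness of corner blocks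
  have hD1 : (d • (1 : Matrix (Fin m) (Fin m) ℝ)).PosDef := aux_smul_one_posDef hdpos
  have hdet : 0 < α * b - c ^ 2 := by
    have h : α * b - c ^ 2 = d := by rw [hα, hc, hd]; field_simp; ring
    rw [h]; exact hdpos
  have hD2 : D2.PosDef := aux_D2_posDef hb hdet
  haveI iD1 : Invertible (d • (1 : Matrix (Fin m) (Fin m) ℝ)) := by
    apply invertibleOfRightInverse _ ((d⁻¹) • (1 : Matrix (Fin m) (Fin m) ℝ))
    rw [Matrix.smul_mul, Matrix.mul_smul, smul_smul, Matrix.one_mul, mul_inv_cancel₀ hdne,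
      one_smul]
  have hinv1 : (d • (1 : Matrix (Fin m) (Fin m) ℝ))⁻¹ = (d⁻¹) • 1 := by
    apply Matrix.inv_eq_right_inv
    rw [Matrix.smul_mul, Matrix.mul_smul, smul_smul, Matrix.one_mul, mul_inv_cancel₀ hdne,
      one_smul]
  have hPt : Pᵀ = P := by
    rw [← Matrix.conjTranspose_eq_transpose_of_trivial]; exact hPh
  have hPt2 : Pᵀ = P := hPt
  have hprod : D2 * D2inv = 1 := by
    rw [hD2def, hD2inv, Matrix.fromBlocks_multiply]
    have s11 : b / d * α + -c / d * c = 1 := by rw [hα, hc, hd]; field_simp; ring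
    have s12 : -c / d * α + α / d * c = 0 := by field_simp; ring
    have s21 : b / d * c + -c / d * b = 0 := by field_simp; ring
    have s22 : -c / d * c + α / d * b = 1 := by rw [hα, hc, hd]; field_simp; ring
    rw [← Matrix.fromBlocks_one]
    simp only [Matrix.smul_mul, Matrix.mul_smul, smul_smul, Matrix.one_mul, ← add_smul]
    rw [s11, s12, s21, s22]
    simp
  haveI iD2 : Invertible D2 := invertibleOfRightInverse _ _ hprod
  have hinv2 : D2⁻¹ = D2inv := Matrix.inv_eq_right_inv hprod
  -- conjugate-transpose identities
  have hYH : Yᴴ = -(Bᵀ * P - c • C) := by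
    simp [hY, Matrix.conjTranspose_eq_transpose_of_trivial, Matrix.transpose_sub,
      Matrix.transpose_mul, Matrix.transpose_smul, hPt, Matrix.transpose_transpose]
  have hY2H : Y2ᴴ = -(Matrix.fromRows (Bᵀ * ((1 / b) • P)) C) := by
    simp [hY2, Matrix.conjTranspose_eq_transpose_of_trivial, Matrix.transpose_fromCols,
      Matrix.transpose_mul, Matrix.transpose_smul, hPt, Matrix.transpose_transpose,
      Matrix.fromRows_neg]
  -- rewrite the two matrices into Schur-complement shape
  have e1 : (-(Matrix.fromBlocks
        (P * A + Aᵀ * P + Cᵀ * C) (P * B - c • Cᵀ)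
        (Bᵀ * P - c • C) ((a * b) • (1 : Matrix (Fin m) (Fin m) ℝ)))) =
      Matrix.fromBlocks W Y Yᴴ (d • 1) := by
    have h4 : -((a * b) • (1 : Matrix (Fin m) (Fin m) ℝ)) = d • 1 := by rw [hd, neg_smul]
    rw [Matrix.fromBlocks_neg, hYH, h4]
  have e2 : (-(Matrix.fromBlocks
        (((1 / b) • P) * A + Aᵀ * ((1 / b) • P))
        (Matrix.fromCols (((1 / b) • P) * B) Cᵀ)
        (Matrix.fromRows (Bᵀ * ((1 / b) • P)) C)
        (Matrix.fromBlocks ((-α) • (1 : Matrix (Fin m) (Fin m) ℝ)) ((-c) • 1) ((-c) • 1)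
          ((-b) • (1 : Matrix (Fin m) (Fin m) ℝ))))) =
      Matrix.fromBlocks X Y2 Y2ᴴ D2 := by
    have h4 : -(Matrix.fromBlocks ((-α) • (1 : Matrix (Fin m) (Fin m) ℝ)) ((-c) • 1) ((-c) • 1)
        ((-b) • (1 : Matrix (Fin m) (Fin m) ℝ))) = D2 := by
      rw [Matrix.fromBlocks_neg, hD2def]
      simp
    rw [Matrix.fromBlocks_neg, hY2H, h4]
  rw [e1, e2, Matrix.PosDef.fromBlocks₂₂ W Y hD1, Matrix.PosDef.fromBlocks₂₂ X Y2 hD2,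
    hinv1, hinv2]
  have key : X - Y2 * D2inv * Y2ᴴ =
      (1 / b) • (W - Y * (d⁻¹ • (1 : Matrix (Fin m) (Fin m) ℝ)) * Yᴴ) := by
    rw [hY2H, hY2, hX, hY, hYH, hW, hD2inv]
    simp only [Matrix.neg_mul, Matrix.mul_neg, neg_neg]
    rw [Matrix.fromCols_mul_fromBlocks, Matrix.fromCols_mul_fromRows]
    simp only [Matrix.smul_mul, Matrix.mul_smul, Matrix.add_mul, Matrix.mul_add, Matrix.sub_mul,
      Matrix.mul_sub, smul_smul, Matrix.mul_one, Matrix.one_mul, smul_sub, smul_add, smul_neg,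
      neg_smul, Matrix.mul_assoc, Matrix.neg_mul, Matrix.mul_neg]
    match_scalars
    all_goals simp only [hα, hc, hd]
    all_goals field_simp
    all_goals try ring
    all_goals tauto
  rw [key]
  exact (aux_posSemidef_smul_iff (by positivity)).symm
end

section
/- Let Ã, Q₀, δQ be n×n real matrices with Q₀ and δQ symmetric; let E be an n×m real matrix, K₀ and δK m×r real matrices, R an r×n real matrix, C̃ a q×n real matrix, F a q×m real matrix, and W₁ an m×m symmetric positive definite real matrix. Define Π₁ := He[Ãᵀ·δQ + Ãᵀ·Q₀ + Q₀·E·K₀·R + δQ·E·K₀·R + Q₀·E·δK·R + C̃ᵀ·F·K₀·R + C̃ᵀ·F·δK·R + Rᵀ·K₀ᵀ·Fᵀ·F·δK·R] + C̃ᵀ·C̃ + Rᵀ·K₀ᵀ·Fᵀ·F·K₀·R. If the 3×3 block matrix [[Π₁ , δQ·E , Rᵀ·δKᵀ] ; [Eᵀ·δQ , −W₁⁻¹ , 0] ; [δK·R , 0 , −(W₁⁻¹ + Fᵀ·F)⁻¹]] is negative semidefinite, then, with Q := Q₀ + δQ and K := K₀ + δK, the matrix He[Q·(Ã + E·K·R)]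 + (C̃ + F·K·R)ᵀ·(C̃ + F·K·R) is negative semidefinite. -/
open Matrix

/-- ICO step: the LMI (11) implies the closed-loop Lyapunov inequality (5) (relaxed to ⪯ 0)
at the updated variables Q = Q₀ + δQ, K = K₀ + δK. -/
theorem ico_lyapunov_constraint
    {n m r q : ℕ}
    (At Q₀ δQ : Matrix (Fin n) (Fin n) ℝ) (hQ₀ : Q₀.IsSymm) (hδQ : δQ.IsSymm)
    (E : Matrix (Fin n) (Fin m) ℝ) (K₀ δK : Matrix (Fin m) (Fin r) ℝ)
    (R : Matrix (Fin r) (Fin n) ℝ) (Ct : Matrix (Fin q) (Fin n) ℝ)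
    (F : Matrix (Fin q) (Fin m) ℝ)
    (W₁ : Matrix (Fin m) (Fin m) ℝ) (hW₁ : W₁.PosDef)
    (Pi₁ : Matrix (Fin n) (Fin n) ℝ)
    (hPi₁ : Pi₁ = (Atᵀ * δQ + Atᵀ * Q₀ + Q₀ * E * K₀ * R + δQ * E * K₀ * R
        + Q₀ * E * δK * R + Ctᵀ * F * K₀ * R + Ctᵀ * F * δK * R
        + Rᵀ * K₀ᵀ * Fᵀ * F * δK * R)
      + (Atᵀ * δQ + Atᵀ * Q₀ + Q₀ * E * K₀ * R + δQ * E * K₀ * R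
        + Q₀ * E * δK * R + Ctᵀ * F * K₀ * R + Ctᵀ * F * δK * R
        + Rᵀ * K₀ᵀ * Fᵀ * F * δK * R)ᵀ
      + Ctᵀ * Ct + Rᵀ * K₀ᵀ * Fᵀ * F * K₀ * R)
    (hLMI : (-(Matrix.fromBlocks
        Pi₁ (Matrix.fromCols (δQ * E) (Rᵀ * δKᵀ))
        (Matrix.fromRows (Eᵀ * δQ) (δK * R))
        (Matrix.fromBlocks (-(W₁⁻¹)) 0 0 (-((W₁⁻¹ + Fᵀ * F)⁻¹))))).PosSemidef) :
    (-((Q₀ + δQ) * (At + E * (K₀ + δK) * R) + ((Q₀ + δQ) * (At + E * (K₀ + δK) * R))ᵀ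
      + (Ct + F * (K₀ + δK) * R)ᵀ * (Ct + F * (K₀ + δK) * R))).PosSemidef := by
  classical
  have hQ0 : Q₀ᵀ = Q₀ := hQ₀
  have hdQ : δQᵀ = δQ := hδQ
  have hW : W₁ᵀ = W₁ := by
    rw [← conjTranspose_eq_transpose_of_trivial]; exact hW₁.isHermitian
  set A : Matrix (Fin m) (Fin n) ℝ := Eᵀ * δQ with hA
  set B : Matrix (Fin m) (Fin n) ℝ := δK * R with hB
  set V : Matrix (Fin m) (Fin m) ℝ := W₁⁻¹ + Fᵀ * F with hV
  have hFF : (Fᵀ * F).PosSemidef := by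
    have := posSemidef_conjTranspose_mul_self F
    simpa [conjTranspose_eq_transpose_of_trivial] using this
  have hVpd : V.PosDef := hW₁.inv.add_posSemidef hFF
  have hWdet : IsUnit W₁.det := hW₁.det_pos.ne'.isUnit
  have hVdet : IsUnit V.det := hVpd.det_pos.ne'.isUnit
  have hVs : Vᵀ = V := by
    rw [← conjTranspose_eq_transpose_of_trivial]; exact hVpd.isHermitian
  have hWinv : W₁⁻¹ᵀ = W₁⁻¹ := by
    rw [← conjTranspose_eq_transpose_of_trivial]; exact hW₁.inv.isHermitian
  have c1 : ∀ X : Matrix (Fin m) (Fin n) ℝ, W₁ * (W₁⁻¹ * X) = X := fun X => by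
    rw [← Matrix.mul_assoc, mul_nonsing_inv _ hWdet, Matrix.one_mul]
  have c2 : ∀ X : Matrix (Fin m) (Fin n) ℝ, W₁⁻¹ * (W₁ * X) = X := fun X => by
    rw [← Matrix.mul_assoc, nonsing_inv_mul _ hWdet, Matrix.one_mul]
  have c3 : ∀ X : Matrix (Fin m) (Fin n) ℝ, V⁻¹ * (V * X) = X := fun X => by
    rw [← Matrix.mul_assoc, nonsing_inv_mul _ hVdet, Matrix.one_mul]
  set Z : Matrix (Fin m ⊕ Fin m) (Fin n) ℝ := fromRows (W₁ * A) (V * B) with hZ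
  set Y : Matrix (Fin n ⊕ (Fin m ⊕ Fin m)) (Fin n) ℝ := fromRows 1 Z with hY
  set S : Matrix (Fin m) (Fin n) ℝ := W₁ * A - B with hS
  set N : Matrix (Fin n ⊕ (Fin m ⊕ Fin m)) (Fin n ⊕ (Fin m ⊕ Fin m)) ℝ :=
    Matrix.fromBlocks Pi₁ (Matrix.fromCols (δQ * E) (Rᵀ * δKᵀ))
      (Matrix.fromRows A B)
      (Matrix.fromBlocks (-(W₁⁻¹)) 0 0 (-(V⁻¹))) with hN
  have h1 : (Yᵀ * (-N) * Y).PosSemidef := by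
    have := hLMI.conjTranspose_mul_mul_same Y
    simpa [conjTranspose_eq_transpose_of_trivial] using this
  have h2 : (Sᵀ * W₁⁻¹ * S).PosSemidef := by
    have := (hW₁.inv.posSemidef).conjTranspose_mul_mul_same S
    simpa [conjTranspose_eq_transpose_of_trivial] using this
  have hYNY : Yᵀ * N * Y = Pi₁ + δQ * E * (W₁ * A) + Rᵀ * δKᵀ * (V * B) := by
    rw [hN, hY, hZ, Matrix.mul_assoc]
    simp only [transpose_fromRows, fromBlocks_mul_fromRows, fromCols_mul_fromRows,
      Matrix.mul_one, Matrix.one_mul, Matrix.zero_mul, Matrix.neg_mul, c2, c3,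
      Matrix.mul_add, Matrix.add_mul, Matrix.mul_neg, add_zero, zero_add, transpose_one]
    abel
  have key : -((Q₀ + δQ) * (At + E * (K₀ + δK) * R) + ((Q₀ + δQ) * (At + E * (K₀ + δK) * R))ᵀ
      + (Ct + F * (K₀ + δK) * R)ᵀ * (Ct + F * (K₀ + δK) * R))
      = Yᵀ * (-N) * Y + Sᵀ * W₁⁻¹ * S := by
    rw [Matrix.mul_neg, Matrix.neg_mul, hYNY, hS, hPi₁, hA, hB, hV]
    simp only [transpose_add, transpose_mul, transpose_sub, transpose_transpose,
      hQ0, hdQ, hW, hWinv, Matrix.mul_add, Matrix.add_mul, Matrix.mul_sub,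
      Matrix.sub_mul, Matrix.mul_assoc, c1, c2]
    noncomm_ring
  rw [key]
  exact h1.add h2
end

section
/- Let P̃₀ and δP̃ be a×b real matrices, K₀ and δK b×c real matrices, X a c×a real matrix, Γ an a×a symmetric real matrix, and W₂ a b×b symmetric positive definite real matrix. If the 3×3 block matrix [[Γ + He[P̃₀·K₀·X + P̃₀·δK·X + δP̃·K₀·X] , δP̃ , Xᵀ·δKᵀ] ; [δP̃ᵀ , −W₂⁻¹ , 0] ; [δK·X , 0 , −W₂]] is negative semidefinite, then He[(P̃₀ + δP̃)·(K₀ + δK)·X] + Γ is negative semidefinite. -/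
open Matrix

private lemma fromColumns_add' {n m₁ m₂ : Type*} (A₁ B₁ : Matrix n m₁ ℝ) (A₂ B₂ : Matrix n m₂ ℝ) :
    fromCols A₁ A₂ + fromCols B₁ B₂ = fromCols (A₁ + B₁) (A₂ + B₂) := by
  ext i (j | j) <;> simp [fromCols]

/-- ICO step: the LMI (12) implies the conic-sector LMI constraint (6)
He[P̃·K·X] + Γ ⪯ 0 at the updated variables. -/
theorem ico_conic_constraint
    {a b c : ℕ}
    (Pt₀ δPt : Matrix (Fin a) (Fin b) ℝ)
    (K₀ δK : Matrix (Fin b) (Fin c) ℝ)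
    (X : Matrix (Fin c) (Fin a) ℝ)
    (Γ : Matrix (Fin a) (Fin a) ℝ) (hΓ : Γ.IsSymm)
    (W₂ : Matrix (Fin b) (Fin b) ℝ) (hW₂ : W₂.PosDef)
    (hLMI : (-(Matrix.fromBlocks
        (Γ + ((Pt₀ * K₀ * X + Pt₀ * δK * X + δPt * K₀ * X)
            + (Pt₀ * K₀ * X + Pt₀ * δK * X + δPt * K₀ * X)ᵀ))
        (Matrix.fromCols δPt (Xᵀ * δKᵀ))
        (Matrix.fromRows δPtᵀ (δK * X))
        (Matrix.fromBlocks (-(W₂⁻¹)) 0 0 (-W₂)))).PosSemidef) :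
    (-((Pt₀ + δPt) * (K₀ + δK) * X + ((Pt₀ + δPt) * (K₀ + δK) * X)ᵀ + Γ)).PosSemidef := by
  have hWsymm : W₂ᵀ = W₂ := by
    have := hW₂.isHermitian
    rwa [IsHermitian, conjTranspose_eq_transpose_of_trivial] at this
  have hWW : W₂ * W₂⁻¹ = 1 := mul_nonsing_inv W₂ hW₂.det_pos.ne'.isUnit
  set B : Matrix (Fin a) (Fin a ⊕ (Fin b ⊕ Fin b)) ℝ :=
    fromCols 1 (fromCols (δPt * W₂) δPt) with hB
  have key := hLMI.mul_mul_conjTranspose_same B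
  have hBH : Bᴴ = fromRows 1 (fromRows (W₂ * δPtᵀ) δPtᵀ) := by
    rw [hB, conjTranspose_fromCols_eq_fromRows_conjTranspose,
      conjTranspose_fromCols_eq_fromRows_conjTranspose]
    simp [conjTranspose_eq_transpose_of_trivial, transpose_mul, hWsymm]
  have hEq : B * (-(Matrix.fromBlocks
        (Γ + ((Pt₀ * K₀ * X + Pt₀ * δK * X + δPt * K₀ * X)
            + (Pt₀ * K₀ * X + Pt₀ * δK * X + δPt * K₀ * X)ᵀ))
        (Matrix.fromCols δPt (Xᵀ * δKᵀ))
        (Matrix.fromRows δPtᵀ (δK * X))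
        (Matrix.fromBlocks (-(W₂⁻¹)) 0 0 (-W₂)))) * Bᴴ =
      -((Pt₀ + δPt) * (K₀ + δK) * X + ((Pt₀ + δPt) * (K₀ + δK) * X)ᵀ + Γ) := by
    rw [hBH, hB]
    rw [fromBlocks_neg, fromBlocks_neg]
    simp only [fromCols_neg, fromRows_neg, fromCols_mul_fromBlocks,
      fromCols_mul_fromRows, fromColumns_add',
      Matrix.mul_zero, Matrix.zero_mul, Matrix.mul_neg, neg_neg,
      Matrix.mul_one, Matrix.one_mul, add_zero, zero_add, Matrix.mul_assoc, hWW,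
      neg_zero, Matrix.neg_mul]
    simp only [Matrix.add_mul, Matrix.mul_add, Matrix.neg_mul, Matrix.mul_neg, Matrix.mul_assoc, neg_neg]
    simp only [← Matrix.mul_assoc, transpose_add, transpose_mul, transpose_transpose,
      Matrix.add_mul, Matrix.mul_add]
    abel
  rw [← hEq]
  exact key
end

section
/- Let Q₀ be an n×n symmetric positive definite real matrix and δQ an n×n symmetric real matrix such that Q := Q₀ + δQ is positive definite. Let M be an n×p real matrix and Z a p×p symmetric real matrix. If the block matrix [[Q₀⁻¹ − Q₀⁻¹·δQ·Q₀⁻¹ , M] ; [Mᵀ , Z]] is positive semidefinite, then Z − Mᵀ·Q·M is positive semidefinite, and in particular trace(Z) ≥ trace(Mᵀ·Q·M). -/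
open Matrix

theorem psd_trace_nonneg {k : ℕ} {A : Matrix (Fin k) (Fin k) ℝ}
    (hA : A.PosSemidef) : 0 ≤ A.trace := by
  have hdiag : ∀ i, 0 ≤ A i i := by
    intro i
    exact hA.diag_nonneg
  exact Finset.sum_nonneg fun i _ => hdiag i

/-- The convexified constraint (10) overbounds the cubic term Mᵀ·Q·M of the H2 objective. -/
theorem convexified_objective_overbound
    {n p : ℕ}
    (Q₀ : Matrix (Fin n) (Fin n) ℝ) (hQ₀ : Q₀.PosDef)
    (δQ : Matrix (Fin n) (Fin n) ℝ) (hδQ : δQ.IsSymm)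
    (hQ : (Q₀ + δQ).PosDef)
    (M : Matrix (Fin n) (Fin p) ℝ)
    (Z : Matrix (Fin p) (Fin p) ℝ) (hZ : Z.IsSymm)
    (hLMI : (Matrix.fromBlocks (Q₀⁻¹ - Q₀⁻¹ * δQ * Q₀⁻¹) M Mᵀ Z).PosSemidef) :
    (Z - Mᵀ * (Q₀ + δQ) * M).PosSemidef ∧
      (Mᵀ * (Q₀ + δQ) * M).trace ≤ Z.trace := by
  set Q : Matrix (Fin n) (Fin n) ℝ := Q₀ + δQ with hQdef
  have hdet₀ : IsUnit Q₀.det := isUnit_iff_ne_zero.2 hQ₀.det_pos.ne'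
  have hdet : IsUnit Q.det := isUnit_iff_ne_zero.2 hQ.det_pos.ne'
  have h1 : Q₀ * Q₀⁻¹ = 1 := Matrix.mul_nonsing_inv _ hdet₀
  have h2 : Q₀⁻¹ * Q₀ = 1 := Matrix.nonsing_inv_mul _ hdet₀
  have h3 : Q * Q⁻¹ = 1 := Matrix.mul_nonsing_inv _ hdet
  have h4 : Q⁻¹ * Q = 1 := Matrix.nonsing_inv_mul _ hdet
  have hδ : δQ = Q - Q₀ := by rw [hQdef]; abel
  have f1 : Q * Q₀⁻¹ = 1 + δQ * Q₀⁻¹ := by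
    rw [hQdef, Matrix.add_mul, h1]
  have f3 : Q * Q₀⁻¹ * δQ * Q⁻¹ = δQ * Q₀⁻¹ := by
    calc Q * Q₀⁻¹ * δQ * Q⁻¹
        = Q * Q₀⁻¹ * (Q * Q⁻¹) - Q * (Q₀⁻¹ * Q₀) * Q⁻¹ := by
          rw [hδ]; noncomm_ring
      _ = Q * Q₀⁻¹ - 1 := by rw [h2, Matrix.mul_one, h3, Matrix.mul_one]
      _ = δQ * Q₀⁻¹ := by rw [hδ, Matrix.sub_mul, h1]
  have key : Q⁻¹ = (Q₀⁻¹ - Q₀⁻¹ * δQ * Q₀⁻¹) + Q₀⁻¹ * δQ * Q⁻¹ * δQ * Q₀⁻¹ := by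
    apply Matrix.inv_eq_right_inv
    calc Q * ((Q₀⁻¹ - Q₀⁻¹ * δQ * Q₀⁻¹) + Q₀⁻¹ * δQ * Q⁻¹ * δQ * Q₀⁻¹)
        = Q * Q₀⁻¹ - Q * Q₀⁻¹ * (δQ * Q₀⁻¹) + Q * Q₀⁻¹ * δQ * Q⁻¹ * (δQ * Q₀⁻¹) := by
          noncomm_ring
      _ = (1 + δQ * Q₀⁻¹) - (1 + δQ * Q₀⁻¹) * (δQ * Q₀⁻¹) + δQ * Q₀⁻¹ * (δQ * Q₀⁻¹) := by
          rw [f3, f1]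
      _ = 1 := by noncomm_ring
  -- symmetry facts
  have hQ₀invSymm : Q₀⁻¹ᴴ = Q₀⁻¹ := (hQ₀.1.inv).eq
  have hδQH : δQᴴ = δQ := by
    simpa [Matrix.conjTranspose_eq_transpose_of_trivial] using hδQ.eq
  -- the correction term is PSD
  have hA : (Q₀⁻¹ * δQ * Q⁻¹ * δQ * Q₀⁻¹).PosSemidef := by
    have := (hQ.inv.posSemidef).conjTranspose_mul_mul_same (δQ * Q₀⁻¹)
    have he : (δQ * Q₀⁻¹)ᴴ * Q⁻¹ * (δQ * Q₀⁻¹) = Q₀⁻¹ * δQ * Q⁻¹ * δQ * Q₀⁻¹ := by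
      rw [Matrix.conjTranspose_mul, hQ₀invSymm, hδQH]
      noncomm_ring
    rwa [he] at this
  -- block matrix [A 0; 0 0] is PSD
  set A := Q₀⁻¹ * δQ * Q⁻¹ * δQ * Q₀⁻¹ with hAdef
  have hblock : (Matrix.fromBlocks A 0 0 (0 : Matrix (Fin p) (Fin p) ℝ)).PosSemidef := by
    obtain ⟨S, hS, hSH⟩ : ∃ S : Matrix (Fin n) (Fin n) ℝ, S * S = A ∧ Sᴴ = S :=
      open scoped MatrixOrder in
      ⟨CFC.sqrt A, CFC.sqrt_mul_sqrt_self A hA.nonneg, (CFC.sqrt_nonneg A).posSemidef.1.eq⟩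
    have heq : (Matrix.fromBlocks S 0 0 (0 : Matrix (Fin p) (Fin p) ℝ))ᴴ *
        Matrix.fromBlocks S 0 0 (0 : Matrix (Fin p) (Fin p) ℝ)
        = Matrix.fromBlocks A 0 0 0 := by
      have hST : Sᵀ = S := by
        rw [← Matrix.conjTranspose_eq_transpose_of_trivial]; exact hSH
      rw [Matrix.fromBlocks_conjTranspose, Matrix.fromBlocks_multiply]
      simp [hST, hSH, hS]
    rw [← heq]
    exact Matrix.posSemidef_conjTranspose_mul_self _
  have hLMI2 : (Matrix.fromBlocks Q⁻¹ M Mᵀ Z).PosSemidef := by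
    have hsum := hLMI.add hblock
    have : Matrix.fromBlocks (Q₀⁻¹ - Q₀⁻¹ * δQ * Q₀⁻¹) M Mᵀ Z +
        Matrix.fromBlocks A 0 0 (0 : Matrix (Fin p) (Fin p) ℝ)
        = Matrix.fromBlocks Q⁻¹ M Mᵀ Z := by
      rw [Matrix.fromBlocks_add, add_zero, add_zero, add_zero, ← key]
    rwa [this] at hsum
  -- Schur complement
  haveI : Invertible Q⁻¹ := (Q⁻¹).invertibleOfIsUnitDet
    (isUnit_iff_ne_zero.2 hQ.inv.det_pos.ne')
  have hMH : Mᴴ = Mᵀ := Matrix.conjTranspose_eq_transpose_of_trivial M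
  have hschur := (Matrix.PosDef.fromBlocks₁₁ M Z hQ.inv).mp (by rwa [hMH])
  rw [hMH, Matrix.nonsing_inv_nonsing_inv Q hdet] at hschur
  refine ⟨hschur, ?_⟩
  have := psd_trace_nonneg hschur
  rw [Matrix.trace_sub] at this
  linarith
end

section
/- Let B₁ be an n×p real matrix, D₂₁ an m×p real matrix, B₂ an n×m real matrix, Â an n_c×n_c real matrix, B̂ an n_c×m real matrix, Ĉ an m×n_c real matrix, and define B̃ := [B₁ ; 0], E := [[−B₂ , 0] ; [0 , I_{n_c}]], S := [D₂₁ ; 0], K := [[0 , Ĉ] ; [B̂ , Â]] as block matrices. Assume D₂₁·B₁ᵀ = 0. Let Q₀ be an (n+n_c)×(n+n_c) symmetric positive definite real matrix, δQ an (n+n_c)×(n+n_c) symmetric real matrix with Q := Q₀ + δQ positive definite, and Z a p×p symmetric real matrix. If the block matrix [[Q₀⁻¹ − Q₀⁻¹·δQ·Q₀⁻¹ , E·K·S] ; [Sᵀ·Kᵀ·Eᵀ , Z]] is positive semidefinite, then trace((B̃ + E·K·S)ᵀ·Q·(B̃ + E·K·S)) ≤ trace(B̃ᵀ·Q·B̃)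 + trace(Z). -/
open Matrix

private lemma psd_trace_nonneg' {k : Type*} [Fintype k] [DecidableEq k]
    {M : Matrix k k ℝ} (hM : M.PosSemidef) : 0 ≤ M.trace := by
  apply Finset.sum_nonneg
  intro i _
  exact hM.diag_nonneg

/-- Inequality (14) of Theorem 2: the convexified objective overbounds the true
closed-loop H2 cost under the standard H2 assumption D₂₁·B₁ᵀ = 0. -/
theorem convexified_cost_overbounds_h2_cost
    {n m p nc : ℕ}
    (B₁ : Matrix (Fin n) (Fin p) ℝ) (D₂₁ : Matrix (Fin m) (Fin p) ℝ)
    (B₂ : Matrix (Fin n) (Fin m) ℝ)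
    (Ahat : Matrix (Fin nc) (Fin nc) ℝ) (Bhat : Matrix (Fin nc) (Fin m) ℝ)
    (Chat : Matrix (Fin m) (Fin nc) ℝ)
    (h : D₂₁ * B₁ᵀ = 0)
    (Q₀ : Matrix (Fin n ⊕ Fin nc) (Fin n ⊕ Fin nc) ℝ) (hQ₀ : Q₀.PosDef)
    (δQ : Matrix (Fin n ⊕ Fin nc) (Fin n ⊕ Fin nc) ℝ) (hδQ : δQ.IsSymm)
    (hQ : (Q₀ + δQ).PosDef)
    (Z : Matrix (Fin p) (Fin p) ℝ) (hZ : Z.IsSymm)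
    (hLMI : (let E : Matrix (Fin n ⊕ Fin nc) (Fin m ⊕ Fin nc) ℝ :=
               Matrix.fromBlocks (-B₂) 0 0 (1 : Matrix (Fin nc) (Fin nc) ℝ)
             let S : Matrix (Fin m ⊕ Fin nc) (Fin p) ℝ := Matrix.fromRows D₂₁ 0
             let K : Matrix (Fin m ⊕ Fin nc) (Fin m ⊕ Fin nc) ℝ :=
               Matrix.fromBlocks 0 Chat Bhat Ahat
             (Matrix.fromBlocks (Q₀⁻¹ - Q₀⁻¹ * δQ * Q₀⁻¹) (E * K * S)
               (Sᵀ * Kᵀ * Eᵀ) Z).PosSemidef)) :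
    (let Bt : Matrix (Fin n ⊕ Fin nc) (Fin p) ℝ := Matrix.fromRows B₁ 0
     let E : Matrix (Fin n ⊕ Fin nc) (Fin m ⊕ Fin nc) ℝ :=
       Matrix.fromBlocks (-B₂) 0 0 (1 : Matrix (Fin nc) (Fin nc) ℝ)
     let S : Matrix (Fin m ⊕ Fin nc) (Fin p) ℝ := Matrix.fromRows D₂₁ 0
     let K : Matrix (Fin m ⊕ Fin nc) (Fin m ⊕ Fin nc) ℝ := Matrix.fromBlocks 0 Chat Bhat Ahat
     ((Bt + E * K * S)ᵀ * (Q₀ + δQ) * (Bt + E * K * S)).trace ≤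
       (Btᵀ * (Q₀ + δQ) * Bt).trace + Z.trace) := by
  simp only [] at hLMI ⊢
  set Bt : Matrix (Fin n ⊕ Fin nc) (Fin p) ℝ := Matrix.fromRows B₁ 0 with hBt
  set E : Matrix (Fin n ⊕ Fin nc) (Fin m ⊕ Fin nc) ℝ :=
    Matrix.fromBlocks (-B₂) 0 0 (1 : Matrix (Fin nc) (Fin nc) ℝ) with hE
  set S : Matrix (Fin m ⊕ Fin nc) (Fin p) ℝ := Matrix.fromRows D₂₁ 0 with hS
  set K : Matrix (Fin m ⊕ Fin nc) (Fin m ⊕ Fin nc) ℝ :=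
    Matrix.fromBlocks 0 Chat Bhat Ahat with hK
  set Q : Matrix (Fin n ⊕ Fin nc) (Fin n ⊕ Fin nc) ℝ := Q₀ + δQ with hQdef
  set G : Matrix (Fin n ⊕ Fin nc) (Fin p) ℝ := E * K * S with hG
  set X : Matrix (Fin n ⊕ Fin nc) (Fin n ⊕ Fin nc) ℝ :=
    Q₀⁻¹ - Q₀⁻¹ * δQ * Q₀⁻¹ with hX
  -- basic facts
  have hdet : IsUnit Q₀.det := isUnit_iff_ne_zero.mpr hQ₀.det_pos.ne'
  have h1 : Q₀ * Q₀⁻¹ = 1 := Matrix.mul_nonsing_inv _ hdet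
  have h2 : Q₀⁻¹ * Q₀ = 1 := Matrix.nonsing_inv_mul _ hdet
  have hQ₀s : Q₀ᵀ = Q₀ := by
    rw [← Matrix.conjTranspose_eq_transpose_of_trivial]
    exact hQ₀.isHermitian
  have hAs : (Q₀⁻¹)ᵀ = Q₀⁻¹ := by rw [Matrix.transpose_nonsing_inv, hQ₀s]
  have hQs : Qᵀ = Q := by rw [hQdef, Matrix.transpose_add, hQ₀s, hδQ.eq]
  -- the LMI matrix
  have hGT : Sᵀ * Kᵀ * Eᵀ = Gᵀ := by
    rw [hG, Matrix.transpose_mul, Matrix.transpose_mul, Matrix.mul_assoc]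
  rw [hGT] at hLMI
  -- SBᵀ = 0 facts
  have hB₁D : B₁ * D₂₁ᵀ = 0 := by
    have := congrArg Matrix.transpose h
    rwa [Matrix.transpose_mul, Matrix.transpose_transpose, Matrix.transpose_zero] at this
  have hBS : Bt * Sᵀ = 0 := by
    rw [hBt, hS, Matrix.transpose_fromRows, Matrix.fromRows_mul_fromCols, hB₁D]
    simp
  have hBG : Bt * Gᵀ = 0 := by
    rw [hG, Matrix.transpose_mul, Matrix.transpose_mul, ← Matrix.mul_assoc, hBS]
    simp
  have hGB : G * Btᵀ = 0 := by
    have := congrArg Matrix.transpose hBG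
    rwa [Matrix.transpose_mul, Matrix.transpose_transpose, Matrix.transpose_zero] at this
  -- cross traces vanish
  have hcross1 : (Gᵀ * Q * Bt).trace = 0 := by
    rw [Matrix.trace_mul_comm, ← Matrix.mul_assoc, hBG, Matrix.zero_mul, Matrix.trace_zero]
  have hcross2 : (Btᵀ * Q * G).trace = 0 := by
    rw [Matrix.trace_mul_comm, ← Matrix.mul_assoc, hGB, Matrix.zero_mul, Matrix.trace_zero]
  -- key identity
  have hc1 : ∀ B : Matrix (Fin n ⊕ Fin nc) (Fin n ⊕ Fin nc) ℝ, Q₀ * (Q₀⁻¹ * B) = B :=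
    fun B => by rw [← Matrix.mul_assoc, h1, Matrix.one_mul]
  have hc2 : ∀ B : Matrix (Fin n ⊕ Fin nc) (Fin n ⊕ Fin nc) ℝ, Q₀⁻¹ * (Q₀ * B) = B :=
    fun B => by rw [← Matrix.mul_assoc, h2, Matrix.one_mul]
  have hkey : Q - Q * X * Q = δQ * Q₀⁻¹ * (Q * (Q₀⁻¹ * δQ)) := by
    rw [hX, hQdef]
    simp only [Matrix.mul_add, Matrix.add_mul, Matrix.mul_sub, Matrix.sub_mul,
      Matrix.mul_assoc, hc1, hc2, h1, h2, Matrix.mul_one, Matrix.one_mul]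
    abel
  -- conjugation of the LMI
  set N : Matrix ((Fin n ⊕ Fin nc) ⊕ Fin p) (Fin p) ℝ :=
    Matrix.fromRows (-(Q * G)) 1 with hN
  have hT : (Nᵀ * Matrix.fromBlocks X G Gᵀ Z * N).PosSemidef := by
    have := hLMI.conjTranspose_mul_mul_same N
    rwa [Matrix.conjTranspose_eq_transpose_of_trivial] at this
  have hNval : Nᵀ * Matrix.fromBlocks X G Gᵀ Z * N =
      Gᵀ * Q * (X * (Q * G)) - Gᵀ * (Q * G) - Gᵀ * Q * G + Z := by
    rw [hN, Matrix.mul_assoc, Matrix.fromBlocks_mul_fromRows, Matrix.transpose_fromRows,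
      Matrix.fromCols_mul_fromRows]
    rw [Matrix.transpose_neg, Matrix.transpose_mul, hQs]
    simp only [Matrix.mul_one, Matrix.one_mul, Matrix.transpose_one, Matrix.mul_neg,
      Matrix.neg_mul, Matrix.mul_add, Matrix.add_mul, Matrix.mul_assoc]
    abel
  -- the PSD correction term
  have hP : ((Q₀⁻¹ * δQ * G)ᵀ * Q * (Q₀⁻¹ * δQ * G)).PosSemidef := by
    have := hQ.posSemidef.conjTranspose_mul_mul_same (Q₀⁻¹ * δQ * G)
    rwa [Matrix.conjTranspose_eq_transpose_of_trivial] at this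
  -- assemble: Z - GᵀQG is PSD
  have hgoal : (Z - Gᵀ * Q * G).PosSemidef := by
    have hsum : Z - Gᵀ * Q * G =
        (Nᵀ * Matrix.fromBlocks X G Gᵀ Z * N) + (Q₀⁻¹ * δQ * G)ᵀ * Q * (Q₀⁻¹ * δQ * G) := by
      rw [hNval]
      have hconj : (Q₀⁻¹ * δQ * G)ᵀ * Q * (Q₀⁻¹ * δQ * G) = Gᵀ * ((Q - Q * X * Q) * G) := by
        rw [hkey]
        simp only [Matrix.transpose_mul, hδQ.eq, hAs, Matrix.mul_assoc]
      rw [hconj]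
      simp only [Matrix.mul_sub, Matrix.sub_mul, Matrix.mul_assoc]
      abel
    rw [hsum]
    exact hT.add hP
  -- final trace bookkeeping
  have hexp : (Bt + G)ᵀ * Q * (Bt + G) =
      Btᵀ * Q * Bt + Btᵀ * Q * G + Gᵀ * Q * Bt + Gᵀ * Q * G := by
    rw [Matrix.transpose_add]
    simp only [Matrix.mul_add, Matrix.add_mul]
    abel
  have htr := psd_trace_nonneg' hgoal
  rw [Matrix.trace_sub] at htr
  rw [hexp, Matrix.trace_add, Matrix.trace_add, Matrix.trace_add, hcross1, hcross2]
  linarith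
end
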